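/- Let (X,T) be a topological dynamical system. For any continuous partition of unity Ψ on X, sup over T-invariant Borel probability measures μ of ( h̃_μ(T) − h̃_μ(T,Ψ) ) ≤ h̃(T|Ψ). -/

import Mathlib

open MeasureTheory Filter Set

/-! ### Partitions of unity -/

/-- A finite partition of unity on `X`: a finite family of functions `X → [0,1]`
summing to `1` everywhere. -/
structure PartUnity (X : Type*) where
  n : ℕ
  f : Fin n → X → ℝ
  nonneg : ∀ i x, 0 ≤ f i x
  le_one : ∀ i x, f i x ≤ 1
  sum_one : ∀ x, ∑ i, f i x = 1

namespace PartUnity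

variable {X Y : Type*}

/-- A continuous partition of unity. -/
def Cont [TopologicalSpace X] (Φ : PartUnity X) : Prop := ∀ i, Continuous (Φ.f i)

/-- A measurable partition of unity. -/
def Meas [MeasurableSpace X] (Φ : PartUnity X) : Prop := ∀ i, Measurable (Φ.f i)

/-- A positive partition of unity. -/
def Pos (Φ : PartUnity X) : Prop := ∀ i x, 0 < Φ.f i x

/-- The join `Φ ∨ Ψ = {φ·ψ : φ ∈ Φ, ψ ∈ Ψ}` of two partitions of unity. -/
def join (Φ Ψ : PartUnity X) : PartUnity X where
  n := Φ.n * Ψ.n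
  f k x := Φ.f (finProdFinEquiv.symm k).1 x * Ψ.f (finProdFinEquiv.symm k).2 x
  nonneg k x := mul_nonneg (Φ.nonneg _ x) (Ψ.nonneg _ x)
  le_one k x := mul_le_one₀ (Φ.le_one _ x) (Ψ.nonneg _ x) (Ψ.le_one _ x)
  sum_one x := by
    rw [← Equiv.sum_comp (finProdFinEquiv : Fin Φ.n × Fin Ψ.n ≃ Fin (Φ.n * Ψ.n))
      (fun k => Φ.f (finProdFinEquiv.symm k).1 x * Ψ.f (finProdFinEquiv.symm k).2 x)]
    simp only [Equiv.symm_apply_apply]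
    rw [Fintype.sum_prod_type]
    dsimp only
    rw [← Finset.sum_mul_sum, Φ.sum_one x, Ψ.sum_one x, one_mul]

/-- Pull back a partition of unity by a map: `TΦ = {φ ∘ T : φ ∈ Φ}`. -/
def comp (Φ : PartUnity X) (T : Y → X) : PartUnity Y where
  n := Φ.n
  f i y := Φ.f i (T y)
  nonneg i y := Φ.nonneg i (T y)
  le_one i y := Φ.le_one i (T y)
  sum_one y := Φ.sum_one (T y)

/-- The trivial partition of unity `{1}`. -/
def triv (X : Type*) : PartUnity X where
  n := 1
  f _ _ := 1
  nonneg _ _ := zero_le_one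
  le_one _ _ := le_rfl
  sum_one _ := by simp

/-- `dyn T Φ n` is the dynamical join `Φ₀ⁿ⁻¹ = ⋁_{i=0}^{n-1} TⁱΦ`
(joined with a harmless trivial factor). -/
def dyn (T : X → X) (Φ : PartUnity X) : ℕ → PartUnity X
  | 0 => triv X
  | n + 1 => Φ.join ((dyn T Φ n).comp T)

/-- The product partition of unity `Φ ⊗ Ψ` on `X × Y`. -/
def prod (Φ : PartUnity X) (Ψ : PartUnity Y) : PartUnity (X × Y) where
  n := Φ.n * Ψ.n
  f k p := Φ.f (finProdFinEquiv.symm k).1 p.1 * Ψ.f (finProdFinEquiv.symm k).2 p.2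
  nonneg k p := mul_nonneg (Φ.nonneg _ _) (Ψ.nonneg _ _)
  le_one k p := mul_le_one₀ (Φ.le_one _ _) (Ψ.nonneg _ _) (Ψ.le_one _ _)
  sum_one p := by
    rw [← Equiv.sum_comp (finProdFinEquiv : Fin Φ.n × Fin Ψ.n ≃ Fin (Φ.n * Ψ.n))
      (fun k => Φ.f (finProdFinEquiv.symm k).1 p.1 * Ψ.f (finProdFinEquiv.symm k).2 p.2)]
    simp only [Equiv.symm_apply_apply]
    rw [Fintype.sum_prod_type]
    dsimp only
    rw [← Finset.sum_mul_sum, Φ.sum_one p.1, Ψ.sum_one p.2, one_mul]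

/-- The diameter of a partition of unity: the maximum of the diameters of the
supports of its members. -/
noncomputable def diam [PseudoMetricSpace X] (Φ : PartUnity X) : ℝ :=
  ⨆ i, Metric.diam (tsupport (Φ.f i))

end PartUnity

/-! ### Metric entropy via partitions of unity -/

variable {X Y : Type*}

/-- The static entropy `H̃_μ(Φ) = Σ_φ ( −μ(φ) log μ(φ) + μ(φ log φ) )`. -/
noncomputable def statEnt [MeasurableSpace X] (μ : Measure X) (Φ : PartUnity X) : ℝ :=
  ∑ i, (-((∫ x, Φ.f i x ∂μ) * Real.log (∫ x, Φ.f i x ∂μ)) +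
    ∫ x, Φ.f i x * Real.log (Φ.f i x) ∂μ)

/-- The conditional measure `μ_ψ`, determined by `μ_ψ(φ) = μ(φψ)/μ(ψ)`. -/
noncomputable def condMeas [MeasurableSpace X] (μ : Measure X) (ψ : X → ℝ) : Measure X :=
  (ENNReal.ofReal (∫ x, ψ x ∂μ))⁻¹ • μ.withDensity (fun x => ENNReal.ofReal (ψ x))

/-- The conditional static entropy `H̃_μ(Φ | Ψ) = Σ_ψ μ(ψ) H̃_{μ_ψ}(Φ)`
(terms with `μ(ψ) = 0` vanish since they are multiplied by `μ(ψ) = 0`). -/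
noncomputable def condStatEnt [MeasurableSpace X] (μ : Measure X) (Φ Ψ : PartUnity X) : ℝ :=
  ∑ j, (∫ x, Ψ.f j x ∂μ) * statEnt (condMeas μ (Ψ.f j)) Φ

/-- The local metric entropy `h̃_μ(T,Φ) = lim_n H̃_μ(Φ₀ⁿ⁻¹)/n`. -/
noncomputable def locEnt [MeasurableSpace X] (T : X → X) (μ : Measure X) (Φ : PartUnity X) : ℝ :=
  Filter.atTop.limsup fun n : ℕ => statEnt μ (PartUnity.dyn T Φ n) / (n : ℝ)

/-- The local conditional metric entropy `h̃_μ(T,Φ|Ψ) = lim_n H̃_μ(Φ₀ⁿ⁻¹|Ψ₀ⁿ⁻¹)/n`. -/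
noncomputable def condLocEnt [MeasurableSpace X] (T : X → X) (μ : Measure X)
    (Φ Ψ : PartUnity X) : ℝ :=
  Filter.atTop.limsup fun n : ℕ =>
    condStatEnt μ (PartUnity.dyn T Φ n) (PartUnity.dyn T Ψ n) / (n : ℝ)

/-- The metric entropy `h̃_μ(T)`: supremum of `h̃_μ(T,Φ)` over continuous
partitions of unity. -/
noncomputable def metEnt [TopologicalSpace X] [MeasurableSpace X]
    (T : X → X) (μ : Measure X) : EReal :=
  ⨆ Φ : {Φ : PartUnity X // Φ.Cont}, ((locEnt T μ Φ.1 : ℝ) : EReal)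

/-! ### Topological entropy via partitions of unity -/

/-- The topological static entropy `H̃(Φ) = Σ_φ sup φ`. -/
noncomputable def topStat (Φ : PartUnity X) : ℝ := ∑ i, ⨆ x, Φ.f i x

/-- The local topological entropy `h̃(T,Φ) = lim_n (1/n) log H̃(Φ₀ⁿ⁻¹)`. -/
noncomputable def topLocEnt (T : X → X) (Φ : PartUnity X) : ℝ :=
  Filter.atTop.limsup fun n : ℕ => Real.log (topStat (PartUnity.dyn T Φ n)) / (n : ℝ)

/-- The topological entropy `h̃_top(T)`: supremum of `h̃(T,Φ)` over continuous
partitions of unity. -/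
noncomputable def topEnt [TopologicalSpace X] (T : X → X) : EReal :=
  ⨆ Φ : {Φ : PartUnity X // Φ.Cont}, ((topLocEnt T Φ.1 : ℝ) : EReal)

/-! ### Classical Kolmogorov–Sinai entropy -/

/-- A finite Borel partition of `X` (indexed; atoms may be empty). -/
structure FinBorelPart (X : Type*) [MeasurableSpace X] where
  n : ℕ
  A : Fin n → Set X
  meas : ∀ i, MeasurableSet (A i)
  disj : ∀ i j, i ≠ j → Disjoint (A i) (A j)
  cover : ⋃ i, A i = Set.univ

/-- Local Kolmogorov–Sinai entropy `h_μ(T,𝒜) = lim_n (1/n) Σ_{A ∈ 𝒜₀ⁿ⁻¹} −μ(A) log μ(A)`. -/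
noncomputable def ksLocEnt [MeasurableSpace X] (T : X → X) (μ : Measure X)
    (P : FinBorelPart X) : ℝ :=
  Filter.atTop.limsup fun n : ℕ =>
    (∑ σ : Fin n → Fin P.n,
      Real.negMulLog (μ (⋂ i : Fin n, T^[(i : ℕ)] ⁻¹' P.A (σ i))).toReal) / (n : ℝ)

/-- The Kolmogorov–Sinai metric entropy `h_μ(T)`. -/
noncomputable def ksEnt [MeasurableSpace X] (T : X → X) (μ : Measure X) : EReal :=
  ⨆ P : FinBorelPart X, ((ksLocEnt T μ P : ℝ) : EReal)

/-! ### Classical topological entropy via open covers -/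

/-- A finite open cover of `X`. -/
structure FinOpenCover (X : Type*) [TopologicalSpace X] where
  n : ℕ
  U : Fin n → Set X
  opn : ∀ i, IsOpen (U i)
  cov : ⋃ i, U i = Set.univ

/-- The member `⋂_{i<n} T^{-i} U_{σ(i)}` of the dynamical refinement of a cover. -/
def dynSet (T : X → X) {m : ℕ} (U : Fin m → Set X) (n : ℕ) (σ : Fin n → Fin m) : Set X :=
  ⋂ i : Fin n, T^[(i : ℕ)] ⁻¹' U (σ i)

/-- Minimal cardinality of a subfamily of `V` covering `S`. -/
noncomputable def coverNum {α : Type*} [Fintype α] (V : α → Set X) (S : Set X) : ℕ :=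
  sInf {k | ∃ t : Finset α, t.card = k ∧ S ⊆ ⋃ i ∈ t, V i}

/-- The local classical topological entropy `h(T,𝒰)` of an open cover. -/
noncomputable def covLocEnt [TopologicalSpace X] (T : X → X) (C : FinOpenCover X) : ℝ :=
  Filter.atTop.limsup fun n : ℕ =>
    Real.log ((coverNum (fun σ : Fin n → Fin C.n => dynSet T C.U n σ) Set.univ : ℕ) : ℝ) / (n : ℝ)

/-- The classical topological entropy `h_top(T)` via open covers. -/
noncomputable def topEntCov [TopologicalSpace X] (T : X → X) : EReal :=
  ⨆ C : FinOpenCover X, ((covLocEnt T C : ℝ) : EReal)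

/-! ### Misiurewicz topological tail entropy -/

/-- The local conditional topological entropy `h(𝒰|𝒱)` of two open covers. -/
noncomputable def misCondLoc [TopologicalSpace X] (T : X → X) (CU CV : FinOpenCover X) : ℝ :=
  Filter.atTop.limsup fun n : ℕ =>
    Real.log (((⨆ τ : Fin n → Fin CV.n,
      coverNum (fun σ : Fin n → Fin CU.n => dynSet T CU.U n σ) (dynSet T CV.U n τ) : ℕ)) : ℝ) / (n : ℝ)

/-- The conditional topological entropy `h(T|𝒱) = sup_𝒰 h(𝒰|𝒱)`. -/
noncomputable def misCond [TopologicalSpace X] (T : X → X) (CV : FinOpenCover X) : EReal :=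
  ⨆ CU : FinOpenCover X, ((misCondLoc T CU CV : ℝ) : EReal)

/-- Misiurewicz's topological tail entropy `h*(T) = inf_𝒱 h(T|𝒱)`. -/
noncomputable def misTail [TopologicalSpace X] (T : X → X) : EReal :=
  ⨅ CV : FinOpenCover X, misCond T CV

/-! ### Topological tail entropy via partitions of unity -/

/-- `H̃(Φ|ψ) = Σ_φ sup_{supp ψ} φ`. -/
noncomputable def condTopStatPU [TopologicalSpace X] (Φ : PartUnity X) (ψ : X → ℝ) : ℝ :=
  ∑ i, ⨆ x ∈ tsupport ψ, Φ.f i x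

/-- The weight set `D(Ψ) = {a : inf ψ ≤ a_ψ ≤ sup ψ, Σ a_ψ = 1}`. -/
def weights (Ψ : PartUnity X) : Set (Fin Ψ.n → ℝ) :=
  {a | (∀ j, (⨅ x, Ψ.f j x) ≤ a j ∧ a j ≤ ⨆ x, Ψ.f j x) ∧ ∑ j, a j = 1}

/-- `H̃_n(Φ|Ψ) = sup_{a ∈ D(Ψ₀ⁿ⁻¹)} Σ_ψ a_ψ H̃(Φ₀ⁿ⁻¹|ψ)`. -/
noncomputable def tailStat [TopologicalSpace X] (T : X → X) (Φ Ψ : PartUnity X) (n : ℕ) : ℝ :=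
  sSup {r | ∃ a ∈ weights (PartUnity.dyn T Ψ n),
    r = ∑ j, a j * condTopStatPU (PartUnity.dyn T Φ n) ((PartUnity.dyn T Ψ n).f j)}

/-- The local conditional topological entropy `h̃(Φ|Ψ) = limsup_n (1/n) log H̃_n(Φ|Ψ)`. -/
noncomputable def tailLoc [TopologicalSpace X] (T : X → X) (Φ Ψ : PartUnity X) : ℝ :=
  Filter.atTop.limsup fun n : ℕ => Real.log (tailStat T Φ Ψ n) / (n : ℝ)

/-- The conditional topological entropy `h̃(T|Ψ) = sup_Φ h̃(Φ|Ψ)` over continuous `Φ`. -/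
noncomputable def condTopEntPU [TopologicalSpace X] (T : X → X) (Ψ : PartUnity X) : EReal :=
  ⨆ Φ : {Φ : PartUnity X // Φ.Cont}, ((tailLoc T Φ.1 Ψ : ℝ) : EReal)

/-- The topological tail entropy `h̃*(T) = inf_Ψ h̃(T|Ψ)` over continuous `Ψ`. -/
noncomputable def tailEntPU [TopologicalSpace X] (T : X → X) : EReal :=
  ⨅ Ψ : {Ψ : PartUnity X // Ψ.Cont}, condTopEntPU T Ψ.1

/-! ### Pressures -/

/-- The Birkhoff sum `S_n g = Σ_{i<n} g ∘ Tⁱ`. -/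
def birkhoff (T : X → X) (g : X → ℝ) (n : ℕ) (x : X) : ℝ :=
  ∑ i ∈ Finset.range n, g (T^[i] x)

/-- The static pressure `P̃(T,g,Φ,n) = Σ_{φ ∈ Φ₀ⁿ⁻¹} sup (φ e^{S_n g})`. -/
noncomputable def puPressStat (T : X → X) (g : X → ℝ) (Φ : PartUnity X) (n : ℕ) : ℝ :=
  ∑ i, ⨆ x, (PartUnity.dyn T Φ n).f i x * Real.exp (birkhoff T g n x)

/-- The local topological pressure `P̃_top(T,g,Φ) = lim_n (1/n) log P̃(T,g,Φ,n)`. -/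
noncomputable def puLocPress (T : X → X) (g : X → ℝ) (Φ : PartUnity X) : ℝ :=
  Filter.atTop.limsup fun n : ℕ => Real.log (puPressStat T g Φ n) / (n : ℝ)

/-- The topological pressure `P̃_top(T,g)` via continuous partitions of unity. -/
noncomputable def puTopPress [TopologicalSpace X] (T : X → X) (g : X → ℝ) : EReal :=
  ⨆ Φ : {Φ : PartUnity X // Φ.Cont}, ((puLocPress T g Φ.1 : ℝ) : EReal)

/-- The classical static pressure of an open cover:
`inf { Σ_{V ∈ 𝒱} sup_V e^{S_n g} : 𝒱 a subcover of 𝒰₀ⁿ⁻¹ }`. -/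
noncomputable def covPressStat [TopologicalSpace X] (T : X → X) (g : X → ℝ)
    (C : FinOpenCover X) (n : ℕ) : ℝ :=
  sInf {r | ∃ t : Finset (Fin n → Fin C.n),
    (Set.univ ⊆ ⋃ σ ∈ t, dynSet T C.U n σ) ∧
    r = ∑ σ ∈ t, ⨆ x ∈ dynSet T C.U n σ, Real.exp (birkhoff T g n x)}

/-- The local classical topological pressure of an open cover. -/
noncomputable def covLocPress [TopologicalSpace X] (T : X → X) (g : X → ℝ)
    (C : FinOpenCover X) : ℝ :=
  Filter.atTop.limsup fun n : ℕ => Real.log (covPressStat T g C n) / (n : ℝ)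

/-- The classical topological pressure `P_top(T,g)` via open covers. -/
noncomputable def topPress [TopologicalSpace X] (T : X → X) (g : X → ℝ) : EReal :=
  ⨆ C : FinOpenCover X, ((covLocPress T g C : ℝ) : EReal)

/-! ### Topological tail pressure -/

/-- `P̃_n(T,g,Φ|Ψ) = sup_{a ∈ D(Ψ₀ⁿ⁻¹)} Σ_ψ a_ψ Σ_φ sup_{supp ψ} (φ e^{S_n g})`. -/
noncomputable def tailPressStat [TopologicalSpace X] (T : X → X) (g : X → ℝ)
    (Φ Ψ : PartUnity X) (n : ℕ) : ℝ :=
  sSup {r | ∃ a ∈ weights (PartUnity.dyn T Ψ n),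
    r = ∑ j, a j * ∑ i, ⨆ x ∈ tsupport ((PartUnity.dyn T Ψ n).f j),
      (PartUnity.dyn T Φ n).f i x * Real.exp (birkhoff T g n x)}

/-- The local topological tail pressure `P̃(T,g,Φ|Ψ) = limsup_n (1/n) log P̃_n(T,g,Φ|Ψ)`. -/
noncomputable def tailLocPress [TopologicalSpace X] (T : X → X) (g : X → ℝ)
    (Φ Ψ : PartUnity X) : ℝ :=
  Filter.atTop.limsup fun n : ℕ => Real.log (tailPressStat T g Φ Ψ n) / (n : ℝ)

/-- The conditional topological pressure `P̃(T,g|Ψ) = sup_Φ P̃(T,g,Φ|Ψ)` over continuous `Φ`. -/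
noncomputable def condTopPressPU [TopologicalSpace X] (T : X → X) (g : X → ℝ)
    (Ψ : PartUnity X) : EReal :=
  ⨆ Φ : {Φ : PartUnity X // Φ.Cont}, ((tailLocPress T g Φ.1 Ψ : ℝ) : EReal)

/-- The topological tail pressure `P̃*(T,g) = inf_Ψ P̃(T,g|Ψ)` over continuous `Ψ`. -/
noncomputable def puTailPress [TopologicalSpace X] (T : X → X) (g : X → ℝ) : EReal :=
  ⨅ Ψ : {Ψ : PartUnity X // Ψ.Cont}, condTopPressPU T g Ψ.1

/-! ### Classical topological tail pressure (Li–Chen–Cheng) -/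

/-- The Bowen ball `B(x,ε,n) = {y : d(Tⁱx,Tⁱy) < ε for all 0 ≤ i < n}`. -/
def bowenBall [PseudoMetricSpace X] (T : X → X) (x : X) (ε : ℝ) (n : ℕ) : Set X :=
  {y | ∀ i < n, dist (T^[i] x) (T^[i] y) < ε}

/-- `E` is `(n,δ)`-separated: distinct points `y,z ∈ E` satisfy `d(Tⁱy,Tⁱz) > δ`
for some `0 ≤ i < n`. -/
def IsSep [PseudoMetricSpace X] (T : X → X) (n : ℕ) (δ : ℝ) (E : Finset X) : Prop :=
  ∀ y ∈ E, ∀ z ∈ E, y ≠ z → ∃ i < n, δ < dist (T^[i] y) (T^[i] z)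

/-- `P_n(T,g,δ,ε) = sup_x sup { Σ_{y∈E} e^{S_n g(y)} : E (n,δ)-separated ⊆ B(x,ε,n) }`. -/
noncomputable def sepPress [PseudoMetricSpace X] (T : X → X) (g : X → ℝ)
    (n : ℕ) (δ ε : ℝ) : ℝ :=
  ⨆ x : X, sSup {r | ∃ E : Finset X, ↑E ⊆ bowenBall T x ε n ∧ IsSep T n δ E ∧
    r = ∑ y ∈ E, Real.exp (birkhoff T g n y)}

/-- The classical topological tail pressure
`P*(T,g) = lim_{ε→0} lim_{δ→0} limsup_n (1/n) log P_n(T,g,δ,ε)`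
(the inner limits are monotone, hence given by `inf_ε sup_δ`). -/
noncomputable def tailPress [PseudoMetricSpace X] (T : X → X) (g : X → ℝ) : EReal :=
  ⨅ ε : {ε : ℝ // 0 < ε}, ⨆ δ : {δ : ℝ // 0 < δ},
    Filter.atTop.limsup fun n : ℕ => ((Real.log (sepPress T g n δ.1 ε.1) / (n : ℝ) : ℝ) : EReal)


section AuxProof
set_option linter.unusedSectionVars false

lemma tangent_mul_log {t m : ℝ} (ht : 0 ≤ t) (hm : 0 < m) :
    t * Real.log m + (t - m) ≤ t * Real.log t := by
  rcases ht.eq_or_lt with h | h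
  · simp only [← h, zero_mul, zero_add, zero_sub, neg_nonpos]
    linarith
  · have h1 : Real.log (m / t) ≤ m / t - 1 := Real.log_le_sub_one_of_pos (div_pos hm h)
    rw [Real.log_div hm.ne' h.ne'] at h1
    have h2 : t * (Real.log m - Real.log t) ≤ t * (m / t - 1) :=
      mul_le_mul_of_nonneg_left h1 ht
    rw [mul_sub, mul_sub, mul_div_cancel₀ _ h.ne', mul_one] at h2
    linarith

lemma gibbs_sum {ι : Type*} [Fintype ι] (p c : ι → ℝ)
    (hp : ∀ i, 0 ≤ p i) (hc : ∀ i, 0 ≤ c i) (hpc : ∀ i, 0 < p i → 0 < c i) :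
    ∑ i, (-(p i * Real.log (p i)) + p i * Real.log (c i)) ≤
      -((∑ i, p i) * Real.log (∑ i, p i)) +
        (∑ i, p i) * Real.log (∑ i, c i) := by
  set P := ∑ i, p i with hPdef
  set C := ∑ i, c i with hCdef
  have hP0 : 0 ≤ P := Finset.sum_nonneg fun i _ => hp i
  rcases hP0.eq_or_lt with hP | hP
  · have hz : ∀ i ∈ Finset.univ, p i = 0 :=
      (Finset.sum_eq_zero_iff_of_nonneg fun i _ => hp i).1 hP.symm
    have : ∀ i ∈ Finset.univ, (-(p i * Real.log (p i)) + p i * Real.log (c i)) = 0 := by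
      intro i hi; rw [hz i hi]; ring
    rw [Finset.sum_congr rfl this, Finset.sum_const, smul_zero, ← hP]
    simp
  · have hC : 0 < C := by
      obtain ⟨i, -, hi⟩ := Finset.exists_lt_of_sum_lt (by simpa using hP :
        ∑ i : ι, (0:ℝ) < ∑ i, p i)
      exact lt_of_lt_of_le (hpc i hi) (Finset.single_le_sum (fun i _ => hc i) (Finset.mem_univ i))
    have key : ∀ i, -(p i * Real.log (p i)) + p i * Real.log (c i) ≤
        p i * Real.log C - p i * Real.log P + (c i * P / C - p i) := by
      intro i
      rcases (hp i).eq_or_lt with h0 | h0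
      · rw [← h0]
        have : 0 ≤ c i * P / C := div_nonneg (mul_nonneg (hc i) hP0) hC.le
        simpa using this
      · have hci := hpc i h0
        have hx : 0 < c i * P / (p i * C) := div_pos (mul_pos hci hP) (mul_pos h0 hC)
        have h1 := Real.log_le_sub_one_of_pos hx
        rw [Real.log_div (mul_pos hci hP).ne' (mul_pos h0 hC).ne',
          Real.log_mul hci.ne' hP.ne', Real.log_mul h0.ne' hC.ne'] at h1
        have h2 := mul_le_mul_of_nonneg_left h1 (hp i)
        have h3 : p i * (c i * P / (p i * C)) = c i * P / C := by
          field_simp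
        nlinarith [h2, h3]
    calc ∑ i, (-(p i * Real.log (p i)) + p i * Real.log (c i))
        ≤ ∑ i, (p i * Real.log C - p i * Real.log P + (c i * P / C - p i)) :=
          Finset.sum_le_sum fun i _ => key i
      _ = P * Real.log C - P * Real.log P + ((∑ i, c i * P / C) - P) := by
          rw [Finset.sum_add_distrib, Finset.sum_sub_distrib, Finset.sum_sub_distrib,
            ← Finset.sum_mul, ← Finset.sum_mul, ← hPdef]
      _ = -(P * Real.log P) + P * Real.log C := by
          have : (∑ i, c i * P / C) = C * P / C := by
            rw [← Finset.sum_div, ← Finset.sum_mul, ← hCdef]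
          rw [this, mul_comm C P, mul_div_assoc, div_self hC.ne', mul_one]
          ring


section SupLemmas
variable {X : Type*} [TopologicalSpace X]

lemma biSup_le_one {f : X → ℝ} (h1 : ∀ x, f x ≤ 1) (S : Set X) :
    (⨆ x ∈ S, f x) ≤ 1 :=
  Real.iSup_le (fun x => Real.iSup_le (fun _ => h1 x) zero_le_one) zero_le_one

lemma biSup_nonneg {f : X → ℝ} (h0 : ∀ x, 0 ≤ f x) (S : Set X) :
    0 ≤ ⨆ x ∈ S, f x :=
  Real.iSup_nonneg fun x => Real.iSup_nonneg fun _ => h0 x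

lemma le_biSup_real {f : X → ℝ} (h1 : ∀ x, f x ≤ 1) {S : Set X} {x : X} (hx : x ∈ S) :
    f x ≤ ⨆ y ∈ S, f y := by
  have bdd : BddAbove (Set.range fun y => ⨆ _ : y ∈ S, f y) := by
    refine ⟨1, ?_⟩
    rintro _ ⟨y, rfl⟩
    exact Real.iSup_le (fun _ => h1 y) zero_le_one
  calc f x = ⨆ _ : x ∈ S, f x := (ciSup_pos (f := fun _ : x ∈ S => f x) hx).symm
    _ ≤ ⨆ y ∈ S, f y := le_ciSup bdd x

end SupLemmas

section IntLemmas
variable {X : Type*} [TopologicalSpace X] [CompactSpace X] [MeasurableSpace X]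
  [OpensMeasurableSpace X]

lemma cont_integrable (μ : Measure X) [IsFiniteMeasure μ] {f : X → ℝ} (hf : Continuous f) :
    Integrable f μ :=
  hf.integrable_of_hasCompactSupport (isClosed_tsupport f).isCompact

lemma integral_eq_zero_aux (μ : Measure X) [IsFiniteMeasure μ] {f g : X → ℝ}
    (hf : Continuous f) (hf0 : ∀ x, 0 ≤ f x) (hfi : ∫ x, f x ∂μ = 0)
    (hfg : ∀ x, f x = 0 → g x = 0) : ∫ x, g x ∂μ = 0 := by
  have h1 : (fun x => f x) =ᵐ[μ] 0 :=
    (integral_eq_zero_iff_of_nonneg (fun x => hf0 x) (cont_integrable μ hf)).1 hfi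
  have h2 : g =ᵐ[μ] 0 := h1.mono fun x hx => hfg x hx
  exact integral_eq_zero_of_ae h2

/-- Key Jensen-type inequality: `A log A - A log B ≤ ∫ φ ψ log ψ` with `A = ∫φψ`, `B = ∫φ`. -/
lemma key_jensen (μ : Measure X) [IsProbabilityMeasure μ] {φ ψ : X → ℝ}
    (hφc : Continuous φ) (hψc : Continuous ψ) (hφ0 : ∀ x, 0 ≤ φ x)
    (hψ0 : ∀ x, 0 ≤ ψ x) (hψ1 : ∀ x, ψ x ≤ 1) :
    (∫ x, φ x * ψ x ∂μ) * Real.log (∫ x, φ x * ψ x ∂μ)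
      - (∫ x, φ x * ψ x ∂μ) * Real.log (∫ x, φ x ∂μ)
      ≤ ∫ x, φ x * (ψ x * Real.log (ψ x)) ∂μ := by
  have hψlogc : Continuous fun x => ψ x * Real.log (ψ x) := Real.continuous_mul_log.comp hψc
  have hA0 : 0 ≤ ∫ x, φ x * ψ x ∂μ := integral_nonneg fun x => mul_nonneg (hφ0 x) (hψ0 x)
  rcases hA0.eq_or_lt with hA | hA
  · rw [← hA]
    have : ∫ x, φ x * (ψ x * Real.log (ψ x)) ∂μ = 0 := by
      refine integral_eq_zero_aux μ (hφc.mul hψc) (fun x => mul_nonneg (hφ0 x) (hψ0 x))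
        hA.symm fun x hx => ?_
      rcases mul_eq_zero.1 hx with h | h
      · rw [h, zero_mul]
      · rw [h, Real.log_zero, mul_zero, mul_zero]
    rw [this]
    simp
  · set A := ∫ x, φ x * ψ x ∂μ with hAdef
    set B := ∫ x, φ x ∂μ with hBdef
    have hAB : A ≤ B := by
      refine integral_mono (cont_integrable μ (hφc.mul hψc)) (cont_integrable μ hφc) fun x => ?_
      calc φ x * ψ x ≤ φ x * 1 := mul_le_mul_of_nonneg_left (hψ1 x) (hφ0 x)
        _ = φ x := mul_one _
    have hB : 0 < B := lt_of_lt_of_le hA hAB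
    set m := A / B with hmdef
    have hm : 0 < m := div_pos hA hB
    have hpt : ∀ x, φ x * (ψ x * Real.log m + (ψ x - m)) ≤ φ x * (ψ x * Real.log (ψ x)) :=
      fun x => mul_le_mul_of_nonneg_left (tangent_mul_log (hψ0 x) hm) (hφ0 x)
    have hint : ∫ x, φ x * (ψ x * Real.log m + (ψ x - m)) ∂μ
        ≤ ∫ x, φ x * (ψ x * Real.log (ψ x)) ∂μ := by
      refine integral_mono ?_ (cont_integrable μ (hφc.mul hψlogc)) hpt
      exact cont_integrable μ (hφc.mul (((hψc.mul continuous_const)).add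
        (hψc.sub continuous_const)))
    have hcomp : ∫ x, φ x * (ψ x * Real.log m + (ψ x - m)) ∂μ = A * Real.log m := by
      have : ∀ x, φ x * (ψ x * Real.log m + (ψ x - m))
          = (φ x * ψ x) * Real.log m + (φ x * ψ x - φ x * m) := by intro x; ring
      rw [integral_congr_ae (Filter.Eventually.of_forall fun x => this x)]
      rw [integral_add, integral_sub, integral_mul_const, integral_mul_const]
      · rw [← hAdef, ← hBdef]
        have : B * m = A := by
          rw [hmdef, mul_div_cancel₀]; exact hB.ne'
        rw [this]; ring
      · exact cont_integrable μ (hφc.mul hψc)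
      · exact cont_integrable μ (hφc.mul continuous_const)
      · exact (cont_integrable μ (hφc.mul hψc)).mul_const _
      · exact ((cont_integrable μ (hφc.mul hψc)).sub
          ((cont_integrable μ (hφc.mul continuous_const))))
    have : A * Real.log m = A * Real.log A - A * Real.log B := by
      rw [hmdef, Real.log_div hA.ne' hB.ne']; ring
    linarith [hint, hcomp, this]
end IntLemmas

end AuxProof

section PartULemmas
variable {X Y : Type*}

lemma PartUnity.n_pos [Nonempty X] (Φ : PartUnity X) : 0 < Φ.n := by
  rcases Nat.eq_zero_or_pos Φ.n with h | h
  · exfalso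
    haveI : IsEmpty (Fin Φ.n) := by rw [h]; infer_instance
    have hs := Φ.sum_one (Classical.arbitrary X)
    rw [Finset.univ_eq_empty, Finset.sum_empty] at hs
    exact zero_ne_one hs
  · exact h

lemma PartUnity.dyn_card (T : X → X) (Φ : PartUnity X) :
    ∀ n, (PartUnity.dyn T Φ n).n = Φ.n ^ n
  | 0 => rfl
  | n + 1 => by
      show Φ.n * (PartUnity.dyn T Φ n).n = Φ.n ^ (n + 1)
      rw [PartUnity.dyn_card T Φ n, pow_succ]
      ring

variable [TopologicalSpace X] [TopologicalSpace Y]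

lemma PartUnity.Cont.join' {Φ Ψ : PartUnity X} (hΦ : Φ.Cont) (hΨ : Ψ.Cont) :
    (Φ.join Ψ).Cont := fun _ => (hΦ _).mul (hΨ _)

lemma PartUnity.Cont.comp' {Φ : PartUnity X} (hΦ : Φ.Cont) {T : Y → X} (hT : Continuous T) :
    (Φ.comp T).Cont := fun i => (hΦ i).comp hT

lemma PartUnity.triv_cont : (PartUnity.triv X).Cont := fun _ => continuous_const

lemma PartUnity.dyn_cont {T : X → X} (hT : Continuous T) {Φ : PartUnity X} (hΦ : Φ.Cont) :
    ∀ n, (PartUnity.dyn T Φ n).Cont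
  | 0 => PartUnity.triv_cont
  | n + 1 => PartUnity.Cont.join' hΦ (PartUnity.Cont.comp' (PartUnity.dyn_cont hT hΦ n) hT)

end PartULemmas

section MainStatic
variable {X : Type*} [TopologicalSpace X] [CompactSpace X] [Nonempty X]
  [MeasurableSpace X] [OpensMeasurableSpace X]

lemma integral_one_eq_sum (μ : Measure X) [IsProbabilityMeasure μ] (Q : PartUnity X)
    (hQ : Q.Cont) {f : X → ℝ} (hf : Continuous f) :
    ∫ x, f x ∂μ = ∑ j, ∫ x, f x * Q.f j x ∂μ := by
  rw [← integral_finset_sum _ fun j (_ : j ∈ Finset.univ) =>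
    cont_integrable μ (f := fun x => f x * Q.f j x) (hf.mul (hQ j))]
  refine integral_congr_ae (Filter.Eventually.of_forall fun x => ?_)
  show f x = ∑ j, f x * Q.f j x
  rw [← Finset.mul_sum, Q.sum_one, mul_one]

lemma statEnt_le_statEnt_add (μ : Measure X) [IsProbabilityMeasure μ]
    (P Q : PartUnity X) (hP : P.Cont) (hQ : Q.Cont) :
    statEnt μ P ≤ statEnt μ Q +
      ∑ j, (∫ x, Q.f j x ∂μ) * Real.log (condTopStatPU P (Q.f j)) := by
  classical
  -- abbreviations (plain `have`-style facts, all explicit)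
  have hp0 : ∀ (i : Fin P.n) (j : Fin Q.n), 0 ≤ ∫ x, P.f i x * Q.f j x ∂μ :=
    fun i j => integral_nonneg fun x => mul_nonneg (P.nonneg i x) (Q.nonneg j x)
  have hq0 : ∀ j : Fin Q.n, 0 ≤ ∫ x, Q.f j x ∂μ :=
    fun j => integral_nonneg fun x => Q.nonneg j x
  have hc0 : ∀ (i : Fin P.n) (j : Fin Q.n), 0 ≤ ⨆ x ∈ tsupport (Q.f j), P.f i x :=
    fun i j => biSup_nonneg (P.nonneg i) _
  have hptc : ∀ (i : Fin P.n) (j : Fin Q.n) (x : X),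
      P.f i x * Q.f j x ≤ (⨆ y ∈ tsupport (Q.f j), P.f i y) * Q.f j x := by
    intro i j x
    rcases (Q.nonneg j x).eq_or_lt with h | h
    · rw [← h, mul_zero, mul_zero]
    · have hxm : x ∈ tsupport (Q.f j) := subset_tsupport _ h.ne'
      exact mul_le_mul_of_nonneg_right (le_biSup_real (P.le_one i) hxm) (Q.nonneg j x)
  have hpcq : ∀ (i : Fin P.n) (j : Fin Q.n),
      (∫ x, P.f i x * Q.f j x ∂μ) ≤ (⨆ y ∈ tsupport (Q.f j), P.f i y) * ∫ x, Q.f j x ∂μ := by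
    intro i j
    have h1 : (∫ x, P.f i x * Q.f j x ∂μ) ≤ ∫ x, (⨆ y ∈ tsupport (Q.f j), P.f i y) * Q.f j x ∂μ :=
      integral_mono (cont_integrable μ ((hP i).mul (hQ j)))
        (cont_integrable μ (continuous_const.mul (hQ j))) (hptc i j)
    rwa [integral_const_mul] at h1
  have hB_eq : ∀ i : Fin P.n, (∫ x, P.f i x ∂μ) = ∑ j, ∫ x, P.f i x * Q.f j x ∂μ :=
    fun i => integral_one_eq_sum μ Q hQ (hP i)
  have hq_eq : ∀ j : Fin Q.n, (∫ x, Q.f j x ∂μ) = ∑ i, ∫ x, P.f i x * Q.f j x ∂μ := by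
    intro j
    rw [integral_one_eq_sum μ P hP (hQ j)]
    exact Finset.sum_congr rfl fun i _ =>
      integral_congr_ae (Filter.Eventually.of_forall fun x => mul_comm _ _)
  -- Step A: per i
  have hA : ∀ i : Fin P.n,
      -((∫ x, P.f i x ∂μ) * Real.log (∫ x, P.f i x ∂μ)) ≤
      ∑ j, (-((∫ x, P.f i x * Q.f j x ∂μ) * Real.log (∫ x, P.f i x * Q.f j x ∂μ))
        + ∫ x, P.f i x * (Q.f j x * Real.log (Q.f j x)) ∂μ) := by
    intro i
    have h6 : ∀ j : Fin Q.n,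
        (∫ x, P.f i x * Q.f j x ∂μ) * Real.log (∫ x, P.f i x * Q.f j x ∂μ)
          - (∫ x, P.f i x * Q.f j x ∂μ) * Real.log (∫ x, P.f i x ∂μ)
          ≤ ∫ x, P.f i x * (Q.f j x * Real.log (Q.f j x)) ∂μ :=
      fun j => key_jensen μ (hP i) (hQ j) (P.nonneg i) (Q.nonneg j) (Q.le_one j)
    have hsum := Finset.sum_le_sum fun j (_ : j ∈ Finset.univ) => h6 j
    rw [Finset.sum_sub_distrib, ← Finset.sum_mul, ← hB_eq i] at hsum
    rw [Finset.sum_add_distrib, Finset.sum_neg_distrib]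
    linarith [hsum]
  -- Step B pointwise-integrated: per i j
  have h3 : ∀ (i : Fin P.n) (j : Fin Q.n),
      (∫ x, (P.f i x * Real.log (P.f i x)) * Q.f j x ∂μ)
        ≤ (∫ x, P.f i x * Q.f j x ∂μ) * Real.log (⨆ y ∈ tsupport (Q.f j), P.f i y) := by
    intro i j
    have hpt : ∀ x, (P.f i x * Real.log (P.f i x)) * Q.f j x
        ≤ (P.f i x * Q.f j x) * Real.log (⨆ y ∈ tsupport (Q.f j), P.f i y) := by
      intro x
      rcases (Q.nonneg j x).eq_or_lt with h | h
      · rw [← h, mul_zero, mul_zero, zero_mul]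
      · have hxm : x ∈ tsupport (Q.f j) := subset_tsupport _ h.ne'
        have hPc : P.f i x ≤ ⨆ y ∈ tsupport (Q.f j), P.f i y := le_biSup_real (P.le_one i) hxm
        rcases (P.nonneg i x).eq_or_lt with h0 | h0
        · simp [← h0]
        · have hlog : Real.log (P.f i x) ≤ Real.log (⨆ y ∈ tsupport (Q.f j), P.f i y) :=
            Real.log_le_log h0 hPc
          calc (P.f i x * Real.log (P.f i x)) * Q.f j x
              = (P.f i x * Q.f j x) * Real.log (P.f i x) := by ring
            _ ≤ (P.f i x * Q.f j x) * Real.log (⨆ y ∈ tsupport (Q.f j), P.f i y) :=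
              mul_le_mul_of_nonneg_left hlog (mul_nonneg (P.nonneg i x) h.le)
    have h1 : (∫ x, (P.f i x * Real.log (P.f i x)) * Q.f j x ∂μ)
        ≤ ∫ x, (P.f i x * Q.f j x) * Real.log (⨆ y ∈ tsupport (Q.f j), P.f i y) ∂μ :=
      integral_mono (cont_integrable μ ((Real.continuous_mul_log.comp (hP i)).mul (hQ j)))
        (cont_integrable μ (((hP i).mul (hQ j)).mul continuous_const)) hpt
    rwa [integral_mul_const] at h1
  have h2 : ∀ i : Fin P.n, (∫ x, P.f i x * Real.log (P.f i x) ∂μ)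
      = ∑ j, ∫ x, (P.f i x * Real.log (P.f i x)) * Q.f j x ∂μ :=
    fun i => integral_one_eq_sum μ Q hQ (Real.continuous_mul_log.comp (hP i))
  have h5 : ∀ j : Fin Q.n, (∑ i, ∫ x, P.f i x * (Q.f j x * Real.log (Q.f j x)) ∂μ)
      = ∫ x, Q.f j x * Real.log (Q.f j x) ∂μ := by
    intro j
    calc (∑ i, ∫ x, P.f i x * (Q.f j x * Real.log (Q.f j x)) ∂μ)
        = ∑ i, ∫ x, (Q.f j x * Real.log (Q.f j x)) * P.f i x ∂μ :=
          Finset.sum_congr rfl fun i _ =>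
            integral_congr_ae (Filter.Eventually.of_forall fun x => by ring)
      _ = ∫ x, Q.f j x * Real.log (Q.f j x) ∂μ :=
          (integral_one_eq_sum μ P hP (Real.continuous_mul_log.comp (hQ j))).symm
  -- Gibbs per j
  have h7 : ∀ j : Fin Q.n,
      (∑ i, (-((∫ x, P.f i x * Q.f j x ∂μ) * Real.log (∫ x, P.f i x * Q.f j x ∂μ))
        + (∫ x, P.f i x * Q.f j x ∂μ) * Real.log (⨆ y ∈ tsupport (Q.f j), P.f i y)))
      ≤ -((∫ x, Q.f j x ∂μ) * Real.log (∫ x, Q.f j x ∂μ))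
        + (∫ x, Q.f j x ∂μ) * Real.log (condTopStatPU P (Q.f j)) := by
    intro j
    have hgb := gibbs_sum (fun i => ∫ x, P.f i x * Q.f j x ∂μ)
      (fun i => ⨆ y ∈ tsupport (Q.f j), P.f i y) (fun i => hp0 i j) (fun i => hc0 i j)
      (fun i hpi => by
        by_contra hci
        push_neg at hci
        have : (⨆ y ∈ tsupport (Q.f j), P.f i y) * (∫ x, Q.f j x ∂μ) ≤ 0 :=
          mul_nonpos_iff.2 (Or.inr ⟨hci, hq0 j⟩)
        exact absurd (lt_of_lt_of_le hpi (le_trans (hpcq i j) this)) (lt_irrefl 0))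
    rw [← hq_eq j] at hgb
    exact hgb
  -- Assembly
  have hsplit : ∀ (F G : Fin P.n → Fin Q.n → ℝ),
      ((∑ i, ∑ j, F i j) + ∑ i, ∑ j, G i j) = ∑ j, ∑ i, (F i j + G i j) := by
    intro F G
    rw [Finset.sum_comm (f := F), Finset.sum_comm (f := G), ← Finset.sum_add_distrib]
    exact Finset.sum_congr rfl fun j _ => Finset.sum_add_distrib.symm
  have step1 : statEnt μ P = (∑ i, -((∫ x, P.f i x ∂μ) * Real.log (∫ x, P.f i x ∂μ)))
      + ∑ i, ∫ x, P.f i x * Real.log (P.f i x) ∂μ := by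
    rw [← Finset.sum_add_distrib]
    rfl
  have stepQ : statEnt μ Q = ∑ j, (-((∫ x, Q.f j x ∂μ) * Real.log (∫ x, Q.f j x ∂μ))
      + ∫ x, Q.f j x * Real.log (Q.f j x) ∂μ) := rfl
  calc statEnt μ P
      = (∑ i, -((∫ x, P.f i x ∂μ) * Real.log (∫ x, P.f i x ∂μ)))
        + ∑ i, ∫ x, P.f i x * Real.log (P.f i x) ∂μ := step1
    _ ≤ (∑ i, ∑ j, (-((∫ x, P.f i x * Q.f j x ∂μ) * Real.log (∫ x, P.f i x * Q.f j x ∂μ))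
          + ∫ x, P.f i x * (Q.f j x * Real.log (Q.f j x)) ∂μ))
        + ∑ i, ∑ j, (∫ x, P.f i x * Q.f j x ∂μ) * Real.log (⨆ y ∈ tsupport (Q.f j), P.f i y) := by
        refine add_le_add (Finset.sum_le_sum fun i _ => hA i) ?_
        rw [Finset.sum_congr rfl fun i (_ : i ∈ Finset.univ) => h2 i]
        exact Finset.sum_le_sum fun i _ => Finset.sum_le_sum fun j _ => h3 i j
    _ = ∑ j, ∑ i, ((-((∫ x, P.f i x * Q.f j x ∂μ) * Real.log (∫ x, P.f i x * Q.f j x ∂μ))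
          + ∫ x, P.f i x * (Q.f j x * Real.log (Q.f j x)) ∂μ)
          + (∫ x, P.f i x * Q.f j x ∂μ) * Real.log (⨆ y ∈ tsupport (Q.f j), P.f i y)) :=
        hsplit _ _
    _ ≤ ∑ j, ((-((∫ x, Q.f j x ∂μ) * Real.log (∫ x, Q.f j x ∂μ))
          + ∫ x, Q.f j x * Real.log (Q.f j x) ∂μ)
          + (∫ x, Q.f j x ∂μ) * Real.log (condTopStatPU P (Q.f j))) := by
        refine Finset.sum_le_sum fun j _ => ?_
        have e1 : (∑ i, ((-((∫ x, P.f i x * Q.f j x ∂μ) * Real.log (∫ x, P.f i x * Q.f j x ∂μ))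
              + ∫ x, P.f i x * (Q.f j x * Real.log (Q.f j x)) ∂μ)
              + (∫ x, P.f i x * Q.f j x ∂μ) * Real.log (⨆ y ∈ tsupport (Q.f j), P.f i y)))
            = (∑ i, (-((∫ x, P.f i x * Q.f j x ∂μ) * Real.log (∫ x, P.f i x * Q.f j x ∂μ))
              + (∫ x, P.f i x * Q.f j x ∂μ) * Real.log (⨆ y ∈ tsupport (Q.f j), P.f i y)))
              + ∑ i, ∫ x, P.f i x * (Q.f j x * Real.log (Q.f j x)) ∂μ := by
          rw [← Finset.sum_add_distrib]
          exact Finset.sum_congr rfl fun i _ => by ring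
        rw [e1, h5 j]
        linarith [h7 j]
    _ = statEnt μ Q + ∑ j, (∫ x, Q.f j x ∂μ) * Real.log (condTopStatPU P (Q.f j)) := by
        rw [stepQ, ← Finset.sum_add_distrib]

end MainStatic

section WeightsLayer
set_option linter.unusedSectionVars false
variable {X : Type*} [TopologicalSpace X] [CompactSpace X] [Nonempty X]
  [MeasurableSpace X] [OpensMeasurableSpace X]

lemma condTopStatPU_le_card (P : PartUnity X) (ψ : X → ℝ) :
    condTopStatPU P ψ ≤ (P.n : ℝ) := by
  calc condTopStatPU P ψ ≤ ∑ _i : Fin P.n, (1 : ℝ) :=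
        Finset.sum_le_sum fun i _ => biSup_le_one (P.le_one i) _
    _ = (P.n : ℝ) := by simp

lemma condTopStatPU_nonneg (P : PartUnity X) (ψ : X → ℝ) : 0 ≤ condTopStatPU P ψ :=
  Finset.sum_nonneg fun i _ => biSup_nonneg (P.nonneg i) _

lemma one_le_condTopStatPU (P : PartUnity X) {ψ : X → ℝ} {x : X} (hx : ψ x ≠ 0) :
    1 ≤ condTopStatPU P ψ := by
  have hxm : x ∈ tsupport ψ := subset_tsupport _ hx
  calc (1 : ℝ) = ∑ i, P.f i x := (P.sum_one x).symm
    _ ≤ condTopStatPU P ψ := Finset.sum_le_sum fun i _ => le_biSup_real (P.le_one i) hxm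

lemma exists_ne_zero_of_integral_pos (μ : Measure X) {g : X → ℝ}
    (h : 0 < ∫ x, g x ∂μ) : ∃ x, g x ≠ 0 := by
  by_contra hall
  push_neg at hall
  rw [show g = fun _ => (0 : ℝ) from funext hall] at h
  simp at h

lemma integral_mem_weights (μ : Measure X) [IsProbabilityMeasure μ] (Q : PartUnity X)
    (hQ : Q.Cont) : (fun j => ∫ x, Q.f j x ∂μ) ∈ weights Q := by
  refine ⟨fun j => ⟨?_, ?_⟩, ?_⟩
  · have hbdd : BddBelow (Set.range (Q.f j)) := ⟨0, by rintro _ ⟨x, rfl⟩; exact Q.nonneg j x⟩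
    have h1 : ∀ x, (⨅ y, Q.f j y) ≤ Q.f j x := fun x => ciInf_le hbdd x
    calc (⨅ y, Q.f j y) = ∫ _x, (⨅ y, Q.f j y) ∂μ := by
          rw [integral_const, probReal_univ, one_smul]
      _ ≤ ∫ x, Q.f j x ∂μ := integral_mono (integrable_const _) (cont_integrable μ (hQ j)) h1
  · have hbdd : BddAbove (Set.range (Q.f j)) := ⟨1, by rintro _ ⟨x, rfl⟩; exact Q.le_one j x⟩
    have h1 : ∀ x, Q.f j x ≤ ⨆ y, Q.f j y := fun x => le_ciSup hbdd x
    calc ∫ x, Q.f j x ∂μ ≤ ∫ _x, (⨆ y, Q.f j y) ∂μ :=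
          integral_mono (cont_integrable μ (hQ j)) (integrable_const _) h1
      _ = ⨆ y, Q.f j y := by rw [integral_const, probReal_univ, one_smul]
  · rw [← integral_finset_sum _ fun j (_ : j ∈ Finset.univ) => cont_integrable μ (hQ j)]
    have e : (∫ x, ∑ j, Q.f j x ∂μ) = ∫ _x, (1 : ℝ) ∂μ :=
      integral_congr_ae (Filter.Eventually.of_forall fun x => Q.sum_one x)
    rw [e, integral_const, probReal_univ, one_smul]

lemma sum_le_sSup_weights (μ : Measure X) [IsProbabilityMeasure μ] (P Q : PartUnity X)
    (hQ : Q.Cont) :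
    (∑ j, (∫ x, Q.f j x ∂μ) * condTopStatPU P (Q.f j)) ≤
      sSup {r | ∃ a ∈ weights Q, r = ∑ j, a j * condTopStatPU P (Q.f j)} := by
  apply le_csSup
  · refine ⟨(Q.n : ℝ) * (P.n : ℝ), ?_⟩
    rintro r ⟨a, ha, rfl⟩
    have h1 : ∀ j : Fin Q.n, a j * condTopStatPU P (Q.f j) ≤ 1 * (P.n : ℝ) := by
      intro j
      have ha0 : 0 ≤ a j := le_trans (le_ciInf fun x => Q.nonneg j x) (ha.1 j).1
      have ha1 : a j ≤ 1 :=
        le_trans (ha.1 j).2 (Real.iSup_le (fun x => Q.le_one j x) zero_le_one)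
      exact mul_le_mul ha1 (condTopStatPU_le_card P _) (condTopStatPU_nonneg P _) zero_le_one
    calc (∑ j, a j * condTopStatPU P (Q.f j)) ≤ ∑ _j : Fin Q.n, 1 * (P.n : ℝ) :=
          Finset.sum_le_sum fun j _ => h1 j
      _ = (Q.n : ℝ) * (P.n : ℝ) := by simp
  · exact ⟨_, integral_mem_weights μ Q hQ, rfl⟩

lemma one_le_sum_weights (μ : Measure X) [IsProbabilityMeasure μ] (P Q : PartUnity X)
    (hQ : Q.Cont) :
    1 ≤ ∑ j, (∫ x, Q.f j x ∂μ) * condTopStatPU P (Q.f j) := by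
  have hq0 : ∀ j : Fin Q.n, 0 ≤ ∫ x, Q.f j x ∂μ :=
    fun j => integral_nonneg fun x => Q.nonneg j x
  calc (1 : ℝ) = ∑ j, ∫ x, Q.f j x ∂μ := ((integral_mem_weights μ Q hQ).2).symm
    _ ≤ ∑ j, (∫ x, Q.f j x ∂μ) * condTopStatPU P (Q.f j) := by
      refine Finset.sum_le_sum fun j _ => ?_
      rcases (hq0 j).eq_or_lt with h | h
      · rw [← h, zero_mul]
      · obtain ⟨x, hx⟩ := exists_ne_zero_of_integral_pos μ h
        nlinarith [one_le_condTopStatPU P (ψ := Q.f j) hx]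

lemma sSup_weights_le (P Q : PartUnity X) :
    sSup {r | ∃ a ∈ weights Q, r = ∑ j, a j * condTopStatPU P (Q.f j)} ≤ (P.n : ℝ) := by
  refine Real.sSup_le ?_ (Nat.cast_nonneg _)
  rintro r ⟨a, ha, rfl⟩
  calc (∑ j, a j * condTopStatPU P (Q.f j)) ≤ ∑ j, a j * (P.n : ℝ) := by
        refine Finset.sum_le_sum fun j _ => ?_
        have ha0 : 0 ≤ a j := le_trans (le_ciInf fun x => Q.nonneg j x) (ha.1 j).1
        exact mul_le_mul_of_nonneg_left (condTopStatPU_le_card P _) ha0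
    _ = (P.n : ℝ) := by rw [← Finset.sum_mul, ha.2, one_mul]

lemma sum_mul_log_le_log_sSup (μ : Measure X) [IsProbabilityMeasure μ] (P Q : PartUnity X)
    (hP : P.Cont) (hQ : Q.Cont) :
    (∑ j, (∫ x, Q.f j x ∂μ) * Real.log (condTopStatPU P (Q.f j))) ≤
      Real.log (sSup {r | ∃ a ∈ weights Q, r = ∑ j, a j * condTopStatPU P (Q.f j)}) := by
  have hq0 : ∀ j : Fin Q.n, 0 ≤ ∫ x, Q.f j x ∂μ :=
    fun j => integral_nonneg fun x => Q.nonneg j x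
  have hC1 : ∀ j : Fin Q.n, 0 < (∫ x, Q.f j x ∂μ) → 1 ≤ condTopStatPU P (Q.f j) := by
    intro j h
    obtain ⟨x, hx⟩ := exists_ne_zero_of_integral_pos μ h
    exact one_le_condTopStatPU P hx
  have hgb := gibbs_sum (fun j => ∫ x, Q.f j x ∂μ)
    (fun j => (∫ x, Q.f j x ∂μ) * condTopStatPU P (Q.f j)) hq0
    (fun j => mul_nonneg (hq0 j) (condTopStatPU_nonneg P _))
    (fun j h => mul_pos h (lt_of_lt_of_le one_pos (hC1 j h)))
  rw [(integral_mem_weights μ Q hQ).2] at hgb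
  have heq : ∀ j : Fin Q.n,
      -((∫ x, Q.f j x ∂μ) * Real.log (∫ x, Q.f j x ∂μ))
        + (∫ x, Q.f j x ∂μ) * Real.log ((∫ x, Q.f j x ∂μ) * condTopStatPU P (Q.f j))
      = (∫ x, Q.f j x ∂μ) * Real.log (condTopStatPU P (Q.f j)) := by
    intro j
    rcases (hq0 j).eq_or_lt with h | h
    · rw [← h]; ring
    · have hC : (0 : ℝ) < condTopStatPU P (Q.f j) := lt_of_lt_of_le one_pos (hC1 j h)
      rw [Real.log_mul h.ne' hC.ne']; ring
  rw [Finset.sum_congr rfl fun j _ => heq j] at hgb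
  simp only [Real.log_one, mul_zero, neg_zero, zero_add, one_mul] at hgb
  refine le_trans hgb (Real.log_le_log ?_ (sum_le_sSup_weights μ P Q hQ))
  exact lt_of_lt_of_le one_pos (one_le_sum_weights μ P Q hQ)

lemma statEnt_nonneg (μ : Measure X) [IsProbabilityMeasure μ] (P : PartUnity X)
    (hP : P.Cont) : 0 ≤ statEnt μ P := by
  have h : ∀ i : Fin P.n, 0 ≤ -((∫ x, P.f i x ∂μ) * Real.log (∫ x, P.f i x ∂μ))
      + ∫ x, P.f i x * Real.log (P.f i x) ∂μ := by
    intro i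
    have hk := key_jensen μ (φ := fun _ => (1 : ℝ)) (ψ := P.f i) continuous_const (hP i)
      (fun _ => zero_le_one) (P.nonneg i) (P.le_one i)
    simp only [one_mul, integral_const, measure_univ, probReal_univ, smul_eq_mul,
      mul_one, Real.log_one, mul_zero, sub_zero, one_smul] at hk
    linarith [hk]
  exact Finset.sum_nonneg fun i _ => h i

lemma statEnt_le_log_card (μ : Measure X) [IsProbabilityMeasure μ] (P : PartUnity X)
    (hP : P.Cont) : statEnt μ P ≤ Real.log (P.n : ℝ) := by
  have h1 : ∀ i : Fin P.n, (∫ x, P.f i x * Real.log (P.f i x) ∂μ) ≤ 0 := by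
    intro i
    refine integral_nonpos fun x => ?_
    exact mul_nonpos_of_nonneg_of_nonpos (P.nonneg i x)
      (Real.log_nonpos (P.nonneg i x) (P.le_one i x))
  have hgb := gibbs_sum (fun i => ∫ x, P.f i x ∂μ) (fun _ => (1 : ℝ))
    (fun i => integral_nonneg fun x => P.nonneg i x) (fun _ => zero_le_one)
    (fun _ _ => one_pos)
  rw [(integral_mem_weights μ P hP).2] at hgb
  simp only [Real.log_one, mul_zero, neg_zero, zero_add, one_mul, add_zero,
    Finset.sum_const, Finset.card_univ, Fintype.card_fin, nsmul_eq_mul, mul_one] at hgb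
  have h2 : statEnt μ P ≤ ∑ i, -((∫ x, P.f i x ∂μ) * Real.log (∫ x, P.f i x ∂μ)) := by
    refine Finset.sum_le_sum fun i (_ : i ∈ Finset.univ) => ?_
    linarith [h1 i]
  linarith [hgb, h2]

end WeightsLayer

section DynLayer
set_option linter.unusedSectionVars false
variable {X : Type*} [TopologicalSpace X] [CompactSpace X] [Nonempty X]
  [MeasurableSpace X] [OpensMeasurableSpace X]

lemma locEnt_le_locEnt_add_tailLoc (T : X → X) (hT : Continuous T) (μ : Measure X)
    [IsProbabilityMeasure μ] (Φ Ψ : PartUnity X) (hΦ : Φ.Cont) (hΨ : Ψ.Cont) :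
    locEnt T μ Φ ≤ locEnt T μ Ψ + tailLoc T Φ Ψ := by
  have hΦn : 1 ≤ Φ.n := Φ.n_pos
  have hΨn : 1 ≤ Ψ.n := Ψ.n_pos
  have hΦn' : (1 : ℝ) ≤ (Φ.n : ℝ) := by exact_mod_cast hΦn
  have hΨn' : (1 : ℝ) ≤ (Ψ.n : ℝ) := by exact_mod_cast hΨn
  have hdΦ : ∀ n, (PartUnity.dyn T Φ n).Cont := PartUnity.dyn_cont hT hΦ
  have hdΨ : ∀ n, (PartUnity.dyn T Ψ n).Cont := PartUnity.dyn_cont hT hΨ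
  set u : ℕ → ℝ := fun n => statEnt μ (PartUnity.dyn T Φ n) / (n : ℝ) with hu
  set v : ℕ → ℝ := fun n => statEnt μ (PartUnity.dyn T Ψ n) / (n : ℝ) with hv
  set w : ℕ → ℝ := fun n => Real.log (tailStat T Φ Ψ n) / (n : ℝ) with hw
  have htd : ∀ n, tailStat T Φ Ψ n = sSup {r | ∃ a ∈ weights (PartUnity.dyn T Ψ n),
      r = ∑ j, a j * condTopStatPU (PartUnity.dyn T Φ n) ((PartUnity.dyn T Ψ n).f j)} :=
    fun n => rfl
  have htail1 : ∀ n, 1 ≤ tailStat T Φ Ψ n := fun n =>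
    le_trans (one_le_sum_weights μ (PartUnity.dyn T Φ n) (PartUnity.dyn T Ψ n) (hdΨ n))
      (sum_le_sSup_weights μ (PartUnity.dyn T Φ n) (PartUnity.dyn T Ψ n) (hdΨ n))
  have htailU : ∀ n, tailStat T Φ Ψ n ≤ (Φ.n : ℝ) ^ n := by
    intro n
    have h := sSup_weights_le (PartUnity.dyn T Φ n) (PartUnity.dyn T Ψ n)
    rw [PartUnity.dyn_card T Φ n, ← htd n] at h
    calc tailStat T Φ Ψ n ≤ ((Φ.n ^ n : ℕ) : ℝ) := h
      _ = (Φ.n : ℝ) ^ n := by push_cast; ring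
  have hu0 : ∀ n, 0 ≤ u n := fun n =>
    div_nonneg (statEnt_nonneg μ _ (hdΦ n)) (Nat.cast_nonneg n)
  have hv0 : ∀ n, 0 ≤ v n := fun n =>
    div_nonneg (statEnt_nonneg μ _ (hdΨ n)) (Nat.cast_nonneg n)
  have hw0 : ∀ n, 0 ≤ w n := fun n =>
    div_nonneg (Real.log_nonneg (htail1 n)) (Nat.cast_nonneg n)
  have hvU : ∀ n, v n ≤ Real.log (Ψ.n : ℝ) := by
    intro n
    rcases Nat.eq_zero_or_pos n with h | h
    · subst h
      simp only [hv, Nat.cast_zero, div_zero]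
      exact Real.log_nonneg hΨn'
    · have hn : (0 : ℝ) < (n : ℝ) := by exact_mod_cast h
      have h1 : statEnt μ (PartUnity.dyn T Ψ n) ≤ Real.log (((PartUnity.dyn T Ψ n).n : ℝ)) :=
        statEnt_le_log_card μ _ (hdΨ n)
      rw [PartUnity.dyn_card] at h1
      have h2 : ((Ψ.n ^ n : ℕ) : ℝ) = (Ψ.n : ℝ) ^ n := by push_cast; ring
      rw [h2, Real.log_pow] at h1
      rw [hv, div_le_iff₀ hn]
      calc statEnt μ (PartUnity.dyn T Ψ n) ≤ (n : ℝ) * Real.log (Ψ.n : ℝ) := h1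
        _ = Real.log (Ψ.n : ℝ) * (n : ℝ) := mul_comm _ _
  have hwU : ∀ n, w n ≤ Real.log (Φ.n : ℝ) := by
    intro n
    rcases Nat.eq_zero_or_pos n with h | h
    · subst h
      simp only [hw, Nat.cast_zero, div_zero]
      exact Real.log_nonneg hΦn'
    · have hn : (0 : ℝ) < (n : ℝ) := by exact_mod_cast h
      have h1 : Real.log (tailStat T Φ Ψ n) ≤ Real.log ((Φ.n : ℝ) ^ n) :=
        Real.log_le_log (lt_of_lt_of_le one_pos (htail1 n)) (htailU n)
      rw [Real.log_pow] at h1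
      rw [hw, div_le_iff₀ hn]
      calc Real.log (tailStat T Φ Ψ n) ≤ (n : ℝ) * Real.log (Φ.n : ℝ) := h1
        _ = Real.log (Φ.n : ℝ) * (n : ℝ) := mul_comm _ _
  have huvw : ∀ n, u n ≤ v n + w n := by
    intro n
    rcases Nat.eq_zero_or_pos n with h | h
    · subst h
      simp [hu, hv, hw]
    · have hn : (0 : ℝ) < (n : ℝ) := by exact_mod_cast h
      have hmain : statEnt μ (PartUnity.dyn T Φ n) ≤
          statEnt μ (PartUnity.dyn T Ψ n) + Real.log (tailStat T Φ Ψ n) := by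
        refine le_trans (statEnt_le_statEnt_add μ (PartUnity.dyn T Φ n)
          (PartUnity.dyn T Ψ n) (hdΦ n) (hdΨ n)) ?_
        rw [htd n]
        have := sum_mul_log_le_log_sSup μ (PartUnity.dyn T Φ n) (PartUnity.dyn T Ψ n)
          (hdΦ n) (hdΨ n)
        linarith [this]
      calc u n = statEnt μ (PartUnity.dyn T Φ n) / (n : ℝ) := rfl
        _ ≤ (statEnt μ (PartUnity.dyn T Ψ n) + Real.log (tailStat T Φ Ψ n)) / (n : ℝ) :=
          (div_le_div_iff_of_pos_right hn).2 hmain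
        _ = v n + w n := add_div _ _ _
  have hcov : Filter.IsCoboundedUnder (· ≤ ·) Filter.atTop u :=
    (Filter.isBoundedUnder_of ⟨0, fun n => hu0 n⟩ :
      Filter.IsBoundedUnder (· ≥ ·) Filter.atTop u).isCoboundedUnder_le
  have h1 : locEnt T μ Φ ≤ Filter.atTop.limsup (v + w) := by
    refine Filter.limsup_le_limsup (Filter.Eventually.of_forall fun n => huvw n) hcov ?_
    exact Filter.isBoundedUnder_of
      ⟨Real.log (Ψ.n : ℝ) + Real.log (Φ.n : ℝ), fun n => add_le_add (hvU n) (hwU n)⟩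
  have h2 : Filter.atTop.limsup (v + w) ≤
      Filter.atTop.limsup v + Filter.atTop.limsup w :=
    limsup_add_le (Filter.isBoundedUnder_of ⟨0, fun n => hv0 n⟩)
      (Filter.isBoundedUnder_of ⟨Real.log (Ψ.n : ℝ), fun n => hvU n⟩)
      ((Filter.isBoundedUnder_of ⟨0, fun n => hw0 n⟩ :
        Filter.IsBoundedUnder (· ≥ ·) Filter.atTop w).isCoboundedUnder_le)
      (Filter.isBoundedUnder_of ⟨Real.log (Φ.n : ℝ), fun n => hwU n⟩)
  have h3 : Filter.atTop.limsup v = locEnt T μ Ψ := rfl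
  have h4 : Filter.atTop.limsup w = tailLoc T Φ Ψ := rfl
  calc locEnt T μ Φ ≤ Filter.atTop.limsup (v + w) := h1
    _ ≤ Filter.atTop.limsup v + Filter.atTop.limsup w := h2
    _ = locEnt T μ Ψ + tailLoc T Φ Ψ := by rw [h3, h4]

end DynLayer

/-- For any continuous partition of unity `Ψ`,
`sup_μ ( h̃_μ(T) − h̃_μ(T,Ψ) ) ≤ h̃(T|Ψ)`, the supremum running over `T`-invariant
Borel probability measures. -/
theorem iSup_entropy_defect_le_condTopEntPU {X : Type*} [MetricSpace X] [CompactSpace X] [Nonempty X]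
    [MeasurableSpace X] [BorelSpace X]
    (T : X → X) (hT : Continuous T) (hTsurj : Function.Surjective T)
    (Ψ : PartUnity X) (hΨ : Ψ.Cont) :
    (⨆ μ : {μ : Measure X // IsProbabilityMeasure μ ∧ MeasurePreserving T μ μ},
      (metEnt T μ.1 - ((locEnt T μ.1 Ψ : ℝ) : EReal))) ≤ condTopEntPU T Ψ := by
  apply iSup_le
  rintro ⟨μ, hμprob, hμinv⟩
  haveI := hμprob
  rw [EReal.sub_le_iff_le_add (Or.inl (EReal.coe_ne_bot _)) (Or.inl (EReal.coe_ne_top _))]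
  refine iSup_le ?_
  rintro ⟨Φ, hΦ⟩
  have key : locEnt T μ Φ ≤ locEnt T μ Ψ + tailLoc T Φ Ψ :=
    locEnt_le_locEnt_add_tailLoc T hT μ Φ Ψ hΦ hΨ
  have h1 : ((locEnt T μ Φ : ℝ) : EReal) ≤
      ((tailLoc T Φ Ψ : ℝ) : EReal) + ((locEnt T μ Ψ : ℝ) : EReal) := by
    rw [← EReal.coe_add]
    exact EReal.coe_le_coe_iff.2 (by linarith)
  refine h1.trans (add_le_add_left ?_ _)
  exact le_iSup (fun Φ' : {Φ' : PartUnity X // Φ'.Cont} =>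
    ((tailLoc T Φ'.1 Ψ : ℝ) : EReal)) ⟨Φ, hΦ⟩
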